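/- Fix x ∈ X and assume the map s ↦ σ_s(x) from S to X is finite-to-one. Then: (i) for all u, u' ∈ S with σ_u(x) = σ_{u'}(x) one has Q^⊥ ξ_u = Q^⊥ ξ_{u'}; and (ii) Q^⊥ ξ_u ≠ 0 for every u ∈ S. -/

import Mathlib

/-- with `Q` the orthogonal projection of `ℓ²(S)` onto `H₀`, if the map
`s ↦ σ_s(x)` is finite-to-one then `Q^⊥ ξ_u` depends only on the orbit point `σ_u(x)`,
and `Q^⊥ ξ_u ≠ 0` for every `u`. -/
theorem Qperp_basis_vectors
    {S : Type} [AddCancelCommMonoid S] [Countable S] [DecidableEq S]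
    {X : Type} [MetricSpace X] [CompactSpace X] [Nonempty X]
    (σ : S → C(X, X))
    (hσ0 : σ 0 = ContinuousMap.id X)
    (hσadd : ∀ s t : S, σ (s + t) = (σ s).comp (σ t))
    (hσsurj : ∀ s : S, Function.Surjective (σ s))
    (x : X)
    -- the map s ↦ σ_s(x) is finite-to-one
    (hfin : ∀ y : X, {s : S | (σ s) x = y}.Finite)
    -- Q is the orthogonal projection of ℓ²(S) onto H₀
    (Q : lp (fun _ : S => ℂ) 2 →L[ℂ] lp (fun _ : S => ℂ) 2)
    (hQmem : ∀ η : lp (fun _ : S => ℂ) 2,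
      Q η ∈ (Submodule.span ℂ {v : lp (fun _ : S => ℂ) 2 | ∃ s t : S,
        (σ s) x = (σ t) x ∧ v = lp.single 2 s (1 : ℂ) - lp.single 2 t (1 : ℂ)}).topologicalClosure)
    (hQfix : ∀ η ∈ (Submodule.span ℂ {v : lp (fun _ : S => ℂ) 2 | ∃ s t : S,
        (σ s) x = (σ t) x ∧ v = lp.single 2 s (1 : ℂ) - lp.single 2 t (1 : ℂ)}).topologicalClosure,
      Q η = η)
    (hQorth : ∀ (η : lp (fun _ : S => ℂ) 2),
      ∀ v ∈ (Submodule.span ℂ {v : lp (fun _ : S => ℂ) 2 | ∃ s t : S,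
        (σ s) x = (σ t) x ∧ v = lp.single 2 s (1 : ℂ) - lp.single 2 t (1 : ℂ)}).topologicalClosure,
      inner ℂ (η - Q η) v = (0 : ℂ)) :
    -- (i) Q^⊥ξ_u depends only on the orbit point σ_u(x)
    (∀ u u' : S, (σ u) x = (σ u') x →
      lp.single 2 u (1 : ℂ) - Q (lp.single 2 u (1 : ℂ)) =
        lp.single 2 u' (1 : ℂ) - Q (lp.single 2 u' (1 : ℂ))) ∧
    (∀ u : S, lp.single 2 u (1 : ℂ) - Q (lp.single 2 u (1 : ℂ)) ≠ 0) := by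
  set gens : Set (lp (fun _ : S => ℂ) 2) := {v : lp (fun _ : S => ℂ) 2 | ∃ s t : S,
        (σ s) x = (σ t) x ∧ v = lp.single 2 s (1 : ℂ) - lp.single 2 t (1 : ℂ)} with hgens
  set K := (Submodule.span ℂ gens).topologicalClosure with hK
  constructor
  · intro u u' huu'
    have hvmem : lp.single 2 u (1 : ℂ) - lp.single 2 u' (1 : ℂ) ∈ K := by
      apply Submodule.le_topologicalClosure
      exact Submodule.subset_span ⟨u, u', huu', rfl⟩
    have := hQfix _ hvmem
    rw [map_sub] at this
    have h2 : Q (lp.single 2 u (1 : ℂ)) - Q (lp.single 2 u' (1 : ℂ)) =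
        lp.single 2 u (1 : ℂ) - lp.single 2 u' (1 : ℂ) := this
    abel_nf
    abel_nf at h2
    linear_combination (norm := abel_nf) -h2
  · intro u hu
    -- the fiber of σ_u x is finite
    set F : Finset S := (hfin ((σ u) x)).toFinset with hF
    set w : lp (fun _ : S => ℂ) 2 := ∑ s ∈ F, lp.single 2 s (1 : ℂ) with hw
    have hinner : ∀ v : lp (fun _ : S => ℂ) 2, (inner ℂ w v : ℂ) = ∑ s ∈ F, v s := by
      intro v
      rw [hw, sum_inner]
      refine Finset.sum_congr rfl fun s _ => ?_
      rw [lp.inner_single_left]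
      simp [RCLike.inner_apply]
    -- w is orthogonal to K
    have hKle : K ≤ (ℂ ∙ w)ᗮ := by
      apply Submodule.topologicalClosure_minimal
      · rw [Submodule.span_le]
        rintro v ⟨s, t, hst, rfl⟩
        rw [SetLike.mem_coe, Submodule.mem_orthogonal_singleton_iff_inner_right, hinner]
        have hmem : ∀ r : S, r ∈ F ↔ (σ r) x = (σ u) x := by
          intro r; simp [hF, Set.Finite.mem_toFinset]
        have hval : ∀ r : S, ((lp.single 2 s (1 : ℂ) - lp.single 2 t (1 : ℂ) : lp (fun _ : S => ℂ) 2)) r =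
            (if r = s then (1:ℂ) else 0) - (if r = t then (1:ℂ) else 0) := by
          intro r
          have h0 : ((lp.single 2 s (1 : ℂ) - lp.single 2 t (1 : ℂ) : lp (fun _ : S => ℂ) 2)) r =
              (lp.single 2 s (1 : ℂ) : lp (fun _ : S => ℂ) 2) r
                - (lp.single 2 t (1 : ℂ) : lp (fun _ : S => ℂ) 2) r := rfl
          rw [h0, lp.single_apply, lp.single_apply, Pi.single_apply, Pi.single_apply]
        simp_rw [hval]
        rw [Finset.sum_sub_distrib, Finset.sum_ite_eq' F s (fun _ => (1:ℂ)),
          Finset.sum_ite_eq' F t (fun _ => (1:ℂ))]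
        have : s ∈ F ↔ t ∈ F := by rw [hmem, hmem, hst]
        by_cases hs : s ∈ F
        · simp [hs, this.mp hs]
        · have ht : t ∉ F := fun h => hs (this.mpr h)
          simp [hs, ht]
      · exact Submodule.isClosed_orthogonal _
    -- ξ_u ∈ K since Q ξ_u = ξ_u
    have hxi : lp.single 2 u (1 : ℂ) ∈ K := by
      have : lp.single 2 u (1 : ℂ) = Q (lp.single 2 u (1 : ℂ)) := by
        have := sub_eq_zero.mp hu; exact this
      rw [this]; exact hQmem _
    have horth := hKle hxi
    rw [Submodule.mem_orthogonal_singleton_iff_inner_right, hinner] at horth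
    have huF : u ∈ F := by simp [hF, Set.Finite.mem_toFinset]
    rw [Finset.sum_eq_single u (fun r _ hru => by
        exact lp.single_apply_ne (E := fun _ : S => ℂ) 2 u (1:ℂ) hru)
      (fun h => absurd huF h)] at horth
    rw [lp.single_apply_self] at horth
    exact one_ne_zero horth
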